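/- Let p be a prime, E a p-primary field, and F a finite separable extension of E with F ≠ E. Then there exists an intermediate field E ⊆ F' ⊆ F such that F'/E is a normal extension of degree p. -/

import Mathlib

open IntermediateField Module

open Subgroup

lemma pgroup_exists_normal_index_p {G : Type*} [Group G] [Finite G] {p : ℕ} (hp : p.Prime)
    (hG : IsPGroup p G) {H : Subgroup G} (hH : H ≠ ⊤) :
    ∃ M : Subgroup G, H ≤ M ∧ M.Normal ∧ M.index = p := by
  haveI : Fact p.Prime := ⟨hp⟩
  obtain ⟨M, hM, hHM⟩ := (eq_top_or_exists_le_coatom H).resolve_left hH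
  haveI : Group.IsNilpotent G := hG.isNilpotent
  haveI hMn : M.Normal := NormalizerCondition.normal_of_coatom M
    (fun H hlt => normalizerCondition_of_isNilpotent H hlt) hM
  refine ⟨M, hHM, hMn, ?_⟩
  -- the quotient is a nontrivial p-group
  have hq : IsPGroup p (G ⧸ M) := hG.to_quotient M
  have hcard : Nat.card (G ⧸ M) ≠ 1 := by
    rw [← Subgroup.index_eq_card]
    exact fun h => hM.1 (Subgroup.index_eq_one.mp h)
  obtain ⟨k, hk⟩ := IsPGroup.iff_card.mp hq
  have hk1 : 1 ≤ k := by
    rcases Nat.eq_zero_or_pos k with h | h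
    · exact absurd (by simp [h] at hk; exact hk) hcard
    · exact h
  have hpdvd : p ∣ Nat.card (G ⧸ M) := hk ▸ dvd_pow_self p (Nat.one_le_iff_ne_zero.mp hk1)
  obtain ⟨g, hg⟩ := exists_prime_orderOf_dvd_card' p hpdvd
  set S : Subgroup (G ⧸ M) := Subgroup.zpowers g
  have hScard : Nat.card S = p := by rw [Nat.card_zpowers, hg]
  have hsurj : Function.Surjective (QuotientGroup.mk' M) := QuotientGroup.mk'_surjective M
  have hinj := Subgroup.comap_injective (f := QuotientGroup.mk' M) hsurj
  have hSne : S ≠ ⊥ := by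
    intro h
    rw [h] at hScard
    have : Nat.card (⊥ : Subgroup (G ⧸ M)) = 1 := by
      simp
    rw [this] at hScard
    exact hp.one_lt.ne' hScard.symm
  have hle : M < Subgroup.comap (QuotientGroup.mk' M) S := by
    rw [lt_iff_le_and_ne]
    constructor
    · intro x hx
      simp only [Subgroup.mem_comap]
      have : (QuotientGroup.mk' M) x = 1 := (QuotientGroup.eq_one_iff x).mpr hx
      rw [this]; exact one_mem S
    · intro h
      apply hSne
      apply hinj
      rw [← h, MonoidHom.comap_bot, QuotientGroup.ker_mk']
  have hStop : S = ⊤ := by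
    have := hM.2 _ hle
    apply hinj
    rw [Subgroup.comap_top, this]
  rw [Subgroup.index_eq_card, ← hScard, hStop, Subgroup.card_top]

lemma key_lemma {p : ℕ} (hp : p.Prime) (E F N' : Type*) [Field E] [Field F] [Field N']
    [Algebra E F] [Algebra E N'] [FiniteDimensional E N'] [IsGalois E N']
    (hG : IsPGroup p (N' ≃ₐ[E] N')) (ψ : F →ₐ[E] N') (hne : 1 < Module.finrank E F) :
    ∃ F' : IntermediateField E F, Normal E F' ∧ Module.finrank E F' = p := by
  classical
  haveI : Fact p.Prime := ⟨hp⟩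
  have hψinj : Function.Injective ψ := ψ.toRingHom.injective
  set Fimg : IntermediateField E N' := ψ.fieldRange with hFimgdef
  let e : F ≃ₐ[E] Fimg :=
    AlgEquiv.ofBijective (ψ.codRestrict Fimg.toSubalgebra fun x => ⟨x, rfl⟩)
      ⟨fun a b h => hψinj (congrArg Subtype.val h), fun ⟨y, x, hx⟩ => ⟨x, Subtype.ext hx⟩⟩
  have hFimg : finrank E Fimg = finrank E F := e.toLinearEquiv.finrank_eq.symm
  have hcardG : Nat.card (N' ≃ₐ[E] N') = finrank E N' := by
    rw [IsGalois.card_aut_eq_finrank]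
  have hfix : fixedField (fixingSubgroup Fimg) = Fimg := IsGalois.fixedField_fixingSubgroup Fimg
  have hHne : fixingSubgroup Fimg ≠ ⊤ := by
    intro htop
    have h1 : finrank Fimg N' = Nat.card (N' ≃ₐ[E] N') := by
      conv_lhs => rw [← hfix]
      rw [IntermediateField.finrank_fixedField_eq_card, htop, Nat.card_eq_fintype_card,
        ← Nat.card_eq_fintype_card, Subgroup.card_top]
    have h2 : finrank E Fimg * finrank Fimg N' = finrank E N' := finrank_mul_finrank E Fimg N'
    rw [h1, hcardG] at h2
    have hpos : 0 < finrank E N' := finrank_pos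
    have hf1 : 0 < finrank E Fimg := finrank_pos
    have : finrank E Fimg = 1 := by nlinarith
    rw [hFimg] at this; omega
  obtain ⟨M, hHM, hMn, hMidx⟩ := pgroup_exists_normal_index_p hp hG hHne
  set F₀ : IntermediateField E N' := fixedField M with hF₀def
  haveI : IsGalois E F₀ := IsGalois.of_fixedField_normal_subgroup M
  have hF₀rank : finrank E F₀ = p := by
    have h1 : finrank F₀ N' = Nat.card M := by
      rw [hF₀def, IntermediateField.finrank_fixedField_eq_card, Nat.card_eq_fintype_card]
    have h2 : finrank E F₀ * finrank F₀ N' = finrank E N' := finrank_mul_finrank E F₀ N'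
    have h3 : M.index * Nat.card M = Nat.card (N' ≃ₐ[E] N') := M.index_mul_card
    rw [h1, ← hcardG, ← h3, hMidx] at h2
    have hMpos : (0:ℕ) < Nat.card M := Nat.card_pos
    exact Nat.eq_of_mul_eq_mul_right hMpos h2
  have hF₀le : F₀ ≤ Fimg := by
    rw [← hfix]
    intro x hx
    exact fun g => hx ⟨g.1, hHM g.2⟩
  have hmap : (F₀.comap ψ).map ψ = F₀ :=
    IntermediateField.map_comap_eq_self (fun x hx => hF₀le hx)
  have eq : ↥((F₀.comap ψ).map ψ) ≃ₐ[E] ↥F₀ :=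
    IntermediateField.equivOfEq hmap
  have e2 : ↥(F₀.comap ψ) ≃ₐ[E] ↥F₀ :=
    (IntermediateField.equivMap (F₀.comap ψ) ψ).trans eq
  exact ⟨F₀.comap ψ, Normal.of_algEquiv e2.symm, by rw [e2.toLinearEquiv.finrank_eq, hF₀rank]⟩


/-- A field `K` is `p`-primary if every finite extension of `K` has degree a power of `p`. -/
def IsPPrimary (p : ℕ) (K : Type) [Field K] : Prop :=
  ∀ (L : Type) [Field L] [Algebra K L], FiniteDimensional K L →
    ∃ k : ℕ, Module.finrank K L = p ^ k

theorem exists_normal_subextension_of_degree_p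
    (p : ℕ) (hp : p.Prime) (E F : Type) [Field E] [Field F] [Algebra E F]
    (hE : IsPPrimary p E) [FiniteDimensional E F] [Algebra.IsSeparable E F]
    (hne : 1 < Module.finrank E F) :
    ∃ F' : IntermediateField E F, Normal E F' ∧ Module.finrank E F' = p := by
  haveI : Fact p.Prime := ⟨hp⟩
  let L := AlgebraicClosure F
  haveI : Algebra.IsAlgebraic E L := by
    haveI : Algebra.IsAlgebraic E F := Algebra.IsAlgebraic.of_finite E F
    exact Algebra.IsAlgebraic.trans (R := E) (S := F) (A := L)
  haveI : IsAlgClosure E L := ⟨inferInstance, inferInstance⟩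
  set N : IntermediateField E L := normalClosure E F L with hN
  haveI : Normal E N := inferInstance
  haveI : FiniteDimensional E N := inferInstance
  haveI : Algebra.IsSeparable E N := by
    rw [hN, normalClosure_def]
    haveI : ∀ f : F →ₐ[E] L, Algebra.IsSeparable E f.fieldRange := fun f =>
      AlgEquiv.Algebra.isSeparable (AlgEquiv.ofInjectiveField f)
    exact IntermediateField.isSeparable_iSup E L
  haveI : IsGalois E N := ⟨⟩
  have hG : IsPGroup p (N ≃ₐ[E] N) := by
    obtain ⟨k, hk⟩ := hE N inferInstance
    refine IsPGroup.iff_card.mpr ⟨k, ?_⟩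
    rw [IsGalois.card_aut_eq_finrank, hk]
  let φ : F →ₐ[E] L := IsScalarTower.toAlgHom E F L
  have hφle : φ.fieldRange ≤ N := φ.fieldRange_le_normalClosure
  let ψ : F →ₐ[E] N := φ.codRestrict N.toSubalgebra (fun x => hφle ⟨x, rfl⟩)
  exact key_lemma hp E F N hG ψ hne
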